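/- arXiv:2603.14263 — 9 statements merged into one kernel-verified Lean document; each statement's English description precedes it below -/
import Mathlib

section
/- Let x₁ and x₂ be two points of the polyhedral localization set 𝒳_d, and assume the centered scatter matrix S(A) = A Q_m Aᵀ is positive definite. Then x₁ − x₂ = (1/2) S(A)⁻¹ A Q_m (ξ₂ − ξ₁), where ξ₁, ξ₂ ∈ H are measurement vectors witnessing membership of x₁ and x₂ in 𝒳_d; consequently, for every vector v ∈ ℝⁿ, |vᵀ(x₁ − x₂)| ≤ (1/2) wᵀ |Q_m Aᵀ S(A)⁻¹ v|, where the absolute value of a vector is taken entrywise and w = ξ⁺ − ξ⁻. -/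
open Matrix
open scoped InnerProductSpace

noncomputable section

/-- Reinterpret a plain vector as a point of Euclidean space (with the ℓ² norm). -/
def toE {n : ℕ} (v : Fin n → ℝ) : EuclideanSpace ℝ (Fin n) := WithLp.toLp 2 v

/-- The all-ones m×m matrix 𝟙𝟙ᵀ. -/
def onesM (m : ℕ) : Matrix (Fin m) (Fin m) ℝ := Matrix.of fun _ _ => 1

/-- The centering projector Q_m = I_m − (1/m)𝟙𝟙ᵀ. -/
def Qm (m : ℕ) : Matrix (Fin m) (Fin m) ℝ := 1 - (m : ℝ)⁻¹ • onesM m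

/-- The i-th anchor a⁽ⁱ⁾, i.e. the i-th column of A, as a Euclidean point. -/
def colE {n m : ℕ} (A : Matrix (Fin n) (Fin m) ℝ) (i : Fin m) : EuclideanSpace ℝ (Fin n) :=
  toE fun k => A k i

/-- The vector ω ∈ ℝᵐ with entries ωᵢ = ‖a⁽ⁱ⁾‖₂². -/
def omegaV {n m : ℕ} (A : Matrix (Fin n) (Fin m) ℝ) : Fin m → ℝ := fun i => ‖colE A i‖ ^ 2

/-- The polyhedral localization set
𝒳_d = {x : ∃ α, ξ⁻ ≤ Q_m ω − 2 Q_m Aᵀ x + α𝟙 ≤ ξ⁺}. -/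
def Xd {n m : ℕ} (A : Matrix (Fin n) (Fin m) ℝ) (xim xip : Fin m → ℝ) :
    Set (EuclideanSpace ℝ (Fin n)) :=
  {x | ∃ α : ℝ,
      xim ≤ (Qm m).mulVec (omegaV A) - (2 : ℝ) • ((Qm m * Aᵀ).mulVec x) + α • (1 : Fin m → ℝ) ∧
      (Qm m).mulVec (omegaV A) - (2 : ℝ) • ((Qm m * Aᵀ).mulVec x) + α • (1 : Fin m → ℝ) ≤ xip}

/-- The intersection ℋ of the upper-range balls: ℋ = ∩ᵢ {x : ‖x − a⁽ⁱ⁾‖₂ ≤ √ξᵢ⁺}. -/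
def Hset {n m : ℕ} (A : Matrix (Fin n) (Fin m) ℝ) (xip : Fin m → ℝ) :
    Set (EuclideanSpace ℝ (Fin n)) :=
  {x | ∀ i, ‖x - colE A i‖ ≤ Real.sqrt (xip i)}

/-- Support function h_Ω(v) = sup_{x∈Ω} vᵀx. -/
def suppF {n : ℕ} (Ω : Set (EuclideanSpace ℝ (Fin n))) (v : EuclideanSpace ℝ (Fin n)) : ℝ :=
  sSup ((fun x => ⟪v, x⟫_ℝ) '' Ω)

/-- ψ_Ω(v) = h_Ω(v) + h_Ω(−v). -/
def psiH {n : ℕ} (Ω : Set (EuclideanSpace ℝ (Fin n))) (v : EuclideanSpace ℝ (Fin n)) : ℝ :=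
  suppF Ω v + suppF Ω (-v)

/-- Directional width width_v(Ω) = sup_{x∈Ω} vᵀx − inf_{x∈Ω} vᵀx. -/
def dwidth {n : ℕ} (v : EuclideanSpace ℝ (Fin n)) (Ω : Set (EuclideanSpace ℝ (Fin n))) : ℝ :=
  sSup ((fun x => ⟪v, x⟫_ℝ) '' Ω) - sInf ((fun x => ⟪v, x⟫_ℝ) '' Ω)

/-- The aggregated squared radius ρ(p)² = pᵀ(ξ⁺ − ω) + ‖Ap‖₂². -/
def rho2 {n m : ℕ} (A : Matrix (Fin n) (Fin m) ℝ) (xip : Fin m → ℝ) (p : Fin m → ℝ) : ℝ :=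
  p ⬝ᵥ (xip - omegaV A) + ‖toE (A.mulVec p)‖ ^ 2

lemma onesM_mul (m : ℕ) : onesM m * onesM m = (m : ℝ) • onesM m := by
  ext i j
  simp [onesM, Matrix.mul_apply, Finset.sum_const]

lemma Qm_transpose (m : ℕ) : (Qm m)ᵀ = Qm m := by
  have : (onesM m)ᵀ = onesM m := rfl
  simp [Qm, transpose_sub, transpose_smul, this]

lemma Qm_idem (m : ℕ) : Qm m * Qm m = Qm m := by
  rcases Nat.eq_zero_or_pos m with h | h
  · subst h; ext i j; exact i.elim0
  · have hm : (m : ℝ) ≠ 0 := Nat.cast_ne_zero.mpr h.ne'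
    have key : (m:ℝ)⁻¹ * ((m:ℝ)⁻¹ * (m:ℝ)) = (m:ℝ)⁻¹ := by field_simp
    simp only [Qm, sub_mul, mul_sub, one_mul, mul_one, Matrix.smul_mul, Matrix.mul_smul,
      onesM_mul, smul_smul, key]
    abel

lemma Qm_mulVec_one (m : ℕ) : (Qm m).mulVec 1 = 0 := by
  rcases Nat.eq_zero_or_pos m with h | h
  · subst h; funext i; exact i.elim0
  · have hm : (m : ℝ) ≠ 0 := Nat.cast_ne_zero.mpr h.ne'
    funext i
    simp [Qm, mulVec, dotProduct, onesM, one_apply, Matrix.sub_apply, Finset.sum_sub_distrib,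
      Finset.sum_ite_eq, hm]

/-- If x₁, x₂ ∈ 𝒳_d with measurement witnesses ξ₁, ξ₂ ∈ H and shifts α₁, α₂, and
S(A) = A Q_m Aᵀ ≻ 0, then x₁ − x₂ = (1/2) S(A)⁻¹ A Q_m (ξ₂ − ξ₁), and for every v ∈ ℝⁿ,
|vᵀ(x₁ − x₂)| ≤ (1/2) wᵀ |Q_m Aᵀ S(A)⁻¹ v| with w = ξ⁺ − ξ⁻. -/
theorem stmt0 {n m : ℕ} (A : Matrix (Fin n) (Fin m) ℝ) (xim xip : Fin m → ℝ)
    (hpd : (A * Qm m * Aᵀ).PosDef)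
    (x₁ x₂ : EuclideanSpace ℝ (Fin n)) (α₁ α₂ : ℝ) (ξ₁ ξ₂ : Fin m → ℝ)
    (hξ₁H : xim ≤ ξ₁ ∧ ξ₁ ≤ xip) (hξ₂H : xim ≤ ξ₂ ∧ ξ₂ ≤ xip)
    (hξ₁ : ξ₁ = (Qm m).mulVec (omegaV A) - (2 : ℝ) • ((Qm m * Aᵀ).mulVec x₁)
        + α₁ • (1 : Fin m → ℝ))
    (hξ₂ : ξ₂ = (Qm m).mulVec (omegaV A) - (2 : ℝ) • ((Qm m * Aᵀ).mulVec x₂)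
        + α₂ • (1 : Fin m → ℝ)) :
    x₁ - x₂ = toE ((2 : ℝ)⁻¹ • (((A * Qm m * Aᵀ)⁻¹ * A * Qm m).mulVec (ξ₂ - ξ₁))) ∧
      ∀ v : EuclideanSpace ℝ (Fin n),
        |⟪v, x₁ - x₂⟫_ℝ| ≤
          (2 : ℝ)⁻¹ *
            ((xip - xim) ⬝ᵥ fun i => |((Qm m * Aᵀ * (A * Qm m * Aᵀ)⁻¹).mulVec v) i|) := by
  have hunit : IsUnit (A * Qm m * Aᵀ).det := isUnit_iff_ne_zero.mpr hpd.det_pos.ne'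
  have hdiff : ξ₂ - ξ₁ = (2 : ℝ) • ((Qm m * Aᵀ).mulVec ((x₁ : Fin n → ℝ) - x₂))
      + (α₂ - α₁) • (1 : Fin m → ℝ) := by
    rw [hξ₁, hξ₂, mulVec_sub]
    funext i
    simp [sub_smul]
    ring
  have hkey : (A * Qm m).mulVec (ξ₂ - ξ₁)
      = (2 : ℝ) • (A * Qm m * Aᵀ).mulVec ((x₁ : Fin n → ℝ) - x₂) := by
    rw [hdiff, mulVec_add, mulVec_smul, mulVec_mulVec]
    have h1 : A * Qm m * (Qm m * Aᵀ) = A * Qm m * Aᵀ := by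
      rw [← Matrix.mul_assoc, Matrix.mul_assoc A (Qm m) (Qm m), Qm_idem]
    have h2 : (A * Qm m).mulVec 1 = 0 := by
      rw [← mulVec_mulVec, Qm_mulVec_one, mulVec_zero]
    rw [h1, mulVec_smul, h2, smul_zero, add_zero]
  have heq : (x₁ : Fin n → ℝ) - x₂
      = (2 : ℝ)⁻¹ • (((A * Qm m * Aᵀ)⁻¹ * A * Qm m).mulVec (ξ₂ - ξ₁)) := by
    have : ((A * Qm m * Aᵀ)⁻¹ * A * Qm m).mulVec (ξ₂ - ξ₁)
        = (2 : ℝ) • ((x₁ : Fin n → ℝ) - x₂) := by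
      rw [Matrix.mul_assoc, ← mulVec_mulVec, hkey, mulVec_smul, mulVec_mulVec,
        Matrix.nonsing_inv_mul _ hunit, one_mulVec]
    rw [this, smul_smul]
    norm_num
  refine ⟨by rw [toE, ← heq]; ext i; simp, fun v => ?_⟩
  have hSsymm : (A * Qm m * Aᵀ)ᵀ = A * Qm m * Aᵀ := by
    rw [transpose_mul, transpose_mul, transpose_transpose, Qm_transpose, ← Matrix.mul_assoc]
  have hMT : ((A * Qm m * Aᵀ)⁻¹ * A * Qm m)ᵀ = Qm m * Aᵀ * (A * Qm m * Aᵀ)⁻¹ := by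
    rw [transpose_mul, transpose_mul, Qm_transpose, Matrix.transpose_nonsing_inv, hSsymm]
    rw [← Matrix.mul_assoc]
  set u : Fin m → ℝ := (Qm m * Aᵀ * (A * Qm m * Aᵀ)⁻¹).mulVec v with hu
  have hinner : ⟪v, x₁ - x₂⟫_ℝ = (2 : ℝ)⁻¹ * ((ξ₂ - ξ₁) ⬝ᵥ u) := by
    have h0 : ⟪v, x₁ - x₂⟫_ℝ = (v : Fin n → ℝ) ⬝ᵥ ((x₁ : Fin n → ℝ) - x₂) := by
      simp [PiLp.inner_apply, RCLike.inner_apply, dotProduct]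
      exact Finset.sum_congr rfl fun i _ => mul_comm _ _
    rw [h0, heq, dotProduct_smul, smul_eq_mul, Matrix.dotProduct_mulVec,
      ← Matrix.mulVec_transpose, hMT, ← hu, dotProduct_comm]
  rw [hinner, abs_mul, abs_of_nonneg (by norm_num : (0:ℝ) ≤ (2:ℝ)⁻¹)]
  refine mul_le_mul_of_nonneg_left ?_ (by norm_num)
  calc |(ξ₂ - ξ₁) ⬝ᵥ u| ≤ ∑ i, |(ξ₂ i - ξ₁ i) * u i| := by
        simpa [dotProduct] using Finset.abs_sum_le_sum_abs (fun i => (ξ₂ i - ξ₁ i) * u i) Finset.univ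
    _ ≤ ∑ i, (xip i - xim i) * |u i| := by
        refine Finset.sum_le_sum fun i _ => ?_
        rw [abs_mul]
        refine mul_le_mul_of_nonneg_right ?_ (abs_nonneg _)
        rw [abs_sub_le_iff]
        constructor
        · linarith [hξ₁H.1 i, hξ₂H.2 i]
        · linarith [hξ₂H.1 i, hξ₁H.2 i]
    _ = (xip - xim) ⬝ᵥ fun i => |u i| := by
        simp [dotProduct, Pi.sub_apply]
end
end

section
/- Assume the centered scatter matrix S(A) = A Q_m Aᵀ is positive definite. Then for every unit vector v ∈ ℝⁿ, the directional width of the polyhedral localization set satisfies width_v(𝒳_d) ≤ (1/2) wᵀ |Q_m Aᵀ S(A)⁻¹ v|, where the absolute value of a vector is taken entrywise. -/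
open Matrix
open scoped InnerProductSpace

noncomputable section

/-- If S(A) = A Q_m Aᵀ ≻ 0, then for every unit vector v,
width_v(𝒳_d) ≤ (1/2) wᵀ |Q_m Aᵀ S(A)⁻¹ v|, with w = ξ⁺ − ξ⁻. -/
theorem stmt1 {n m : ℕ} (A : Matrix (Fin n) (Fin m) ℝ) (xim xip : Fin m → ℝ) (hle : xim ≤ xip)
    (hpd : (A * Qm m * Aᵀ).PosDef)
    (v : EuclideanSpace ℝ (Fin n)) (hv : ‖v‖ = 1) :
    dwidth v (Xd A xim xip) ≤
      (2 : ℝ)⁻¹ *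
        ((xip - xim) ⬝ᵥ fun i => |((Qm m * Aᵀ * (A * Qm m * Aᵀ)⁻¹).mulVec v) i|) := by
  classical
  rcases Nat.eq_zero_or_pos m with hm0 | hm
  · exfalso
    subst hm0
    have hv0 : v ≠ 0 := by
      intro h; rw [h] at hv; simp at hv
    have hS : A * Qm 0 * Aᵀ = 0 := by
      ext i j
      simp [Matrix.mul_apply]
    have := hpd.dotProduct_mulVec_pos (x := v.ofLp) (by simpa using hv0)
    rw [hS] at this
    simp at this
  have hm' : (m : ℝ) ≠ 0 := Nat.cast_ne_zero.mpr hm.ne'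
  -- basic matrix facts
  have hJJ : onesM m * onesM m = (m : ℝ) • onesM m := by
    ext i j
    simp [onesM, Matrix.mul_apply]
  have hQsymm : (Qm m)ᵀ = Qm m := by
    ext i j
    simp [Qm, onesM, Matrix.one_apply, eq_comm]
  have hQQ : Qm m * Qm m = Qm m := by
    have hc : (m : ℝ)⁻¹ * ((m : ℝ)⁻¹ * (m : ℝ)) = (m : ℝ)⁻¹ := by field_simp
    unfold Qm
    simp only [Matrix.mul_sub, Matrix.sub_mul, mul_one, one_mul, Matrix.mul_smul,
      Matrix.smul_mul, hJJ, smul_smul]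
    rw [inv_mul_cancel₀ hm', one_smul, sub_self, smul_zero, sub_zero]
  have hQ1 : (Qm m) *ᵥ (1 : Fin m → ℝ) = 0 := by
    ext i
    simp [Qm, Matrix.mulVec, dotProduct, onesM, Matrix.one_apply, sub_mul,
      Finset.sum_sub_distrib]
    field_simp
    ring
  set S : Matrix (Fin n) (Fin n) ℝ := A * Qm m * Aᵀ with hSdef
  set y : Fin m → ℝ := (Qm m * Aᵀ * S⁻¹) *ᵥ v with hydef
  have hSinv : S * S⁻¹ = 1 :=
    Matrix.mul_nonsing_inv S (isUnit_iff_ne_zero.mpr hpd.det_pos.ne')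
  have hAy : A *ᵥ y = v := by
    rw [hydef, Matrix.mulVec_mulVec]
    have : A * (Qm m * Aᵀ * S⁻¹) = 1 := by
      rw [← Matrix.mul_assoc, ← Matrix.mul_assoc, ← hSdef, hSinv]
    rw [this, Matrix.one_mulVec]
  have hQy : (Qm m) *ᵥ y = y := by
    rw [hydef, Matrix.mulVec_mulVec, ← Matrix.mul_assoc, ← Matrix.mul_assoc, hQQ]
  have hy1 : y ⬝ᵥ (1 : Fin m → ℝ) = 0 := by
    rw [← hQy, dotProduct_comm, Matrix.dotProduct_mulVec, ← hQsymm,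
        Matrix.vecMul_transpose, hQ1, zero_dotProduct]
  have hyQAx : ∀ x : EuclideanSpace ℝ (Fin n), y ⬝ᵥ ((Qm m * Aᵀ) *ᵥ (x : Fin n → ℝ)) = v ⬝ᵥ x := by
    intro x
    rw [Matrix.dotProduct_mulVec]
    congr 1
    have : y ᵥ* (Qm m * Aᵀ) = (Qm m * Aᵀ)ᵀ *ᵥ y := by
      rw [Matrix.mulVec_transpose]
    rw [this, Matrix.transpose_mul, Matrix.transpose_transpose, hQsymm,
        ← Matrix.mulVec_mulVec, hQy, hAy]
  have hinner : ∀ x : EuclideanSpace ℝ (Fin n), ⟪v, x⟫_ℝ = v ⬝ᵥ x := by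
    intro x
    simp [PiLp.inner_apply, RCLike.inner_apply, dotProduct, mul_comm]
  set W : ℝ := (xip - xim) ⬝ᵥ fun i => |y i| with hWdef
  have hWnonneg : 0 ≤ W := by
    rw [hWdef]
    apply Finset.sum_nonneg
    intro i _
    exact mul_nonneg (by simpa using sub_nonneg.mpr (hle i)) (abs_nonneg _)
  have key : ∀ x ∈ Xd A xim xip, ∀ x' ∈ Xd A xim xip,
      ⟪v, x⟫_ℝ - ⟪v, x'⟫_ℝ ≤ (2 : ℝ)⁻¹ * W := by
    rintro x ⟨α, h1, h2⟩ x' ⟨α', h1', h2'⟩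
    set c : Fin m → ℝ := (Qm m) *ᵥ (omegaV A) with hcdef
    set z : Fin m → ℝ := c - (2 : ℝ) • ((Qm m * Aᵀ) *ᵥ x) + α • (1 : Fin m → ℝ) with hzdef
    set z' : Fin m → ℝ := c - (2 : ℝ) • ((Qm m * Aᵀ) *ᵥ x') + α' • (1 : Fin m → ℝ) with hz'def
    have hyz : y ⬝ᵥ z = y ⬝ᵥ c - 2 * (v ⬝ᵥ x) := by
      rw [hzdef, dotProduct_add, dotProduct_sub, dotProduct_smul,
          dotProduct_smul, hy1, hyQAx]
      simp
    have hyz' : y ⬝ᵥ z' = y ⬝ᵥ c - 2 * (v ⬝ᵥ x') := by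
      rw [hz'def, dotProduct_add, dotProduct_sub, dotProduct_smul,
          dotProduct_smul, hy1, hyQAx]
      simp
    have hsum : y ⬝ᵥ z' - y ⬝ᵥ z ≤ W := by
      rw [← dotProduct_sub, hWdef]
      unfold dotProduct
      apply Finset.sum_le_sum
      intro i _
      have hzb : |z' i - z i| ≤ xip i - xim i := by
        have := h1 i; have := h2 i; have := h1' i; have := h2' i
        rw [abs_le]
        constructor <;> linarith
      calc y i * (z' - z) i ≤ |y i * (z' - z) i| := le_abs_self _
        _ = |y i| * |z' i - z i| := by rw [abs_mul]; rfl
        _ ≤ |y i| * (xip i - xim i) := mul_le_mul_of_nonneg_left hzb (abs_nonneg _)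
        _ = (xip - xim) i * |y i| := by simp [Pi.sub_apply, mul_comm]
    rw [hinner x, hinner x']
    linarith
  rcases (Xd A xim xip).eq_empty_or_nonempty with he | ⟨x0, hx0⟩
  · rw [dwidth, he]
    simp only [Set.image_empty, Real.sSup_empty, Real.sInf_empty, sub_zero, sub_self]
    positivity
  · set T := (fun x => ⟪v, x⟫_ℝ) '' Xd A xim xip with hTdef
    have hTne : T.Nonempty := ⟨_, x0, hx0, rfl⟩
    have hub : ∀ s ∈ T, s ≤ sInf T + (2 : ℝ)⁻¹ * W := by
      rintro s ⟨x, hx, rfl⟩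
      have hlo : ⟪v, x⟫_ℝ - (2 : ℝ)⁻¹ * W ≤ sInf T := by
        apply le_csInf hTne
        rintro t ⟨x', hx', rfl⟩
        have := key x hx x' hx'
        linarith
      linarith
    have h2 : sSup T ≤ sInf T + (2 : ℝ)⁻¹ * W := csSup_le hTne hub
    rw [dwidth]
    rw [← hTdef]
    linarith
end
end

section
/- Assume the centered scatter matrix S(A) = A Q_m Aᵀ is positive definite. Then for every vector v ∈ ℝⁿ and every nonnegative vector w ∈ ℝᵐ, (1/2) wᵀ |Q_m Aᵀ S(A)⁻¹ v| ≤ (1/2) ‖w‖₂ √(vᵀ S(A)⁻¹ v), where the absolute value of a vector is taken entrywise. -/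
open Matrix
open scoped InnerProductSpace

noncomputable section

/-- If S(A) = A Q_m Aᵀ ≻ 0, then for every v ∈ ℝⁿ and every nonnegative w ∈ ℝᵐ,
(1/2) wᵀ |Q_m Aᵀ S(A)⁻¹ v| ≤ (1/2) ‖w‖₂ √(vᵀ S(A)⁻¹ v). -/
theorem stmt2 {n m : ℕ} (A : Matrix (Fin n) (Fin m) ℝ)
    (hpd : (A * Qm m * Aᵀ).PosDef) (v : Fin n → ℝ) (w : Fin m → ℝ) (hw : ∀ i, 0 ≤ w i) :
    (2 : ℝ)⁻¹ * (w ⬝ᵥ fun i => |((Qm m * Aᵀ * (A * Qm m * Aᵀ)⁻¹).mulVec v) i|) ≤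
      (2 : ℝ)⁻¹ * ‖toE w‖ * Real.sqrt (v ⬝ᵥ (A * Qm m * Aᵀ)⁻¹.mulVec v) := by
  -- abbreviations
  set S := A * Qm m * Aᵀ with hS
  have hSsymm : Sᵀ = S := by
    rw [hS, Matrix.transpose_mul, Matrix.transpose_mul, Matrix.transpose_transpose,
      Qm_transpose, Matrix.mul_assoc]
  have hdet : IsUnit S.det := isUnit_iff_ne_zero.mpr (ne_of_gt hpd.det_pos)
  have hSinv : S * S⁻¹ = 1 := Matrix.mul_nonsing_inv S hdet
  have hSinvS : S⁻¹ * S = 1 := Matrix.nonsing_inv_mul S hdet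
  have hSinvsymm : (S⁻¹)ᵀ = S⁻¹ := by
    rw [Matrix.transpose_nonsing_inv, hSsymm]
  set M := Qm m * Aᵀ * S⁻¹ with hM
  have hMtM : Mᵀ * M = S⁻¹ := by
    have : Mᵀ = S⁻¹ * (A * Qm m) := by
      rw [hM, Matrix.transpose_mul, Matrix.transpose_mul, hSinvsymm,
        Matrix.transpose_transpose, Qm_transpose]
    rw [this, hM]
    calc S⁻¹ * (A * Qm m) * (Qm m * Aᵀ * S⁻¹)
        = S⁻¹ * (A * (Qm m * Qm m) * Aᵀ) * S⁻¹ := by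
          simp only [Matrix.mul_assoc]
      _ = S⁻¹ * S * S⁻¹ := by rw [Qm_idem, hS, Matrix.mul_assoc]
      _ = S⁻¹ := by rw [hSinvS, Matrix.one_mul]
  set u := M.mulVec v with hu
  -- norm of u
  have husq : u ⬝ᵥ u = v ⬝ᵥ S⁻¹.mulVec v := by
    calc u ⬝ᵥ u = v ⬝ᵥ (Mᵀ * M).mulVec v := by
          rw [← Matrix.mulVec_mulVec, Matrix.dotProduct_mulVec, Matrix.dotProduct_mulVec,
            Matrix.vecMul_transpose, Matrix.dotProduct_mulVec]
      _ = v ⬝ᵥ S⁻¹.mulVec v := by rw [hMtM]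
  have habs : (fun i => |u i|) ⬝ᵥ (fun i => |u i|) = u ⬝ᵥ u := by
    simp [dotProduct, abs_mul_abs_self, ← sq]
  have hnorm : ∀ x : Fin m → ℝ, ‖toE x‖ ^ 2 = x ⬝ᵥ x := by
    intro x
    rw [← real_inner_self_eq_norm_sq]
    simp [toE, dotProduct, PiLp.inner_apply, mul_comm]
    rw [EuclideanSpace.norm_sq_eq]
    simp [sq]
  have hdot : w ⬝ᵥ (fun i => |u i|) = ⟪toE w, toE (fun i => |u i|)⟫_ℝ := by
    simp [toE, dotProduct, PiLp.inner_apply, mul_comm]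
  have hCS : w ⬝ᵥ (fun i => |u i|) ≤ ‖toE w‖ * ‖toE (fun i => |u i|)‖ := by
    rw [hdot]; exact real_inner_le_norm _ _
  have hnormeq : ‖toE (fun i => |u i|)‖ = Real.sqrt (v ⬝ᵥ S⁻¹.mulVec v) := by
    have h1 : ‖toE (fun i => |u i|)‖ ^ 2 = v ⬝ᵥ S⁻¹.mulVec v := by
      rw [hnorm, habs, husq]
    rw [← h1, Real.sqrt_sq (norm_nonneg _)]
  have := hCS.trans (le_of_eq (by rw [hnormeq]))
  calc (2 : ℝ)⁻¹ * (w ⬝ᵥ fun i => |((Qm m * Aᵀ * S⁻¹).mulVec v) i|)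
      = (2 : ℝ)⁻¹ * (w ⬝ᵥ fun i => |u i|) := by rw [hu]
    _ ≤ (2 : ℝ)⁻¹ * (‖toE w‖ * Real.sqrt (v ⬝ᵥ S⁻¹.mulVec v)) := by
        apply mul_le_mul_of_nonneg_left this (by norm_num)
    _ = (2 : ℝ)⁻¹ * ‖toE w‖ * Real.sqrt (v ⬝ᵥ S⁻¹.mulVec v) := by ring
end
end

section
/- Let ℋ = ∩ᵢ {x ∈ ℝⁿ : ‖x − a⁽ⁱ⁾‖₂ ≤ √(ξᵢ⁺)} be the intersection of the upper-range balls, and let p ∈ Δ_m be any weight vector in the probability simplex. Then for every x ∈ ℋ, ‖x − c(p)‖₂² ≤ ρ(p)², where c(p) = Ap and ρ(p)² = pᵀ(ξ⁺ − ω) + ‖Ap‖₂²; that is, ℋ is contained in the closed Euclidean ball of center c(p) and squared radius ρ(p)². -/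
open Matrix
open scoped InnerProductSpace

noncomputable section

/-- For any p ∈ Δ_m, every x ∈ ℋ satisfies ‖x − c(p)‖₂² ≤ ρ(p)², where
c(p) = Ap and ρ(p)² = pᵀ(ξ⁺ − ω) + ‖Ap‖₂²; i.e. ℋ is contained in the ball of center c(p)
and squared radius ρ(p)². -/
theorem stmt7 {n m : ℕ} (A : Matrix (Fin n) (Fin m) ℝ) (xip : Fin m → ℝ)
    (hxip : ∀ i, 0 ≤ xip i) (p : Fin m → ℝ) (hp : p ∈ stdSimplex ℝ (Fin m))
    (x : EuclideanSpace ℝ (Fin n)) (hx : x ∈ Hset A xip) :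
    ‖x - toE (A.mulVec p)‖ ^ 2 ≤ rho2 A xip p := by
  obtain ⟨hp0, hp1⟩ := hp
  set c : EuclideanSpace ℝ (Fin n) := toE (A.mulVec p) with hc
  have hinner : ⟪x, c⟫_ℝ = ∑ i, p i * ⟪x, colE A i⟫_ℝ := by
    simp only [hc, toE, colE, PiLp.inner_apply, RCLike.inner_apply, conj_trivial, PiLp.toLp_apply,
      Matrix.mulVec, dotProduct, Finset.mul_sum, Finset.sum_mul]
    rw [Finset.sum_comm]
    apply Finset.sum_congr rfl
    intro i _
    apply Finset.sum_congr rfl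
    intro k _
    ring
  have hkey : ‖x - c‖ ^ 2
      = (∑ i, p i * ‖x - colE A i‖ ^ 2) - (∑ i, p i * omegaV A i) + ‖c‖ ^ 2 := by
    have h1 : ∀ i, ‖x - colE A i‖ ^ 2
        = ‖x‖ ^ 2 - 2 * ⟪x, colE A i⟫_ℝ + ‖colE A i‖ ^ 2 := fun i =>
      norm_sub_sq_real x (colE A i)
    have h2 : ‖x - c‖ ^ 2 = ‖x‖ ^ 2 - 2 * ⟪x, c⟫_ℝ + ‖c‖ ^ 2 := norm_sub_sq_real x c
    have h3 : ∑ i, p i * ‖x - colE A i‖ ^ 2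
        = (∑ i, p i) * ‖x‖ ^ 2 - 2 * ⟪x, c⟫_ℝ + ∑ i, p i * omegaV A i := by
      rw [hinner]
      simp only [h1, omegaV]
      rw [Finset.sum_mul, Finset.mul_sum, ← Finset.sum_sub_distrib, ← Finset.sum_add_distrib]
      exact Finset.sum_congr rfl fun i _ => by ring
    rw [h2, h3, hp1]
    ring
  rw [hkey]
  have hb : ∑ i, p i * ‖x - colE A i‖ ^ 2 ≤ ∑ i, p i * xip i := by
    apply Finset.sum_le_sum
    intro i _
    apply mul_le_mul_of_nonneg_left _ (hp0 i)
    have := hx i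
    calc ‖x - colE A i‖ ^ 2 ≤ Real.sqrt (xip i) ^ 2 := by
          exact pow_le_pow_left₀ (norm_nonneg _) this 2
      _ = xip i := Real.sq_sqrt (hxip i)
  have : rho2 A xip p = (∑ i, p i * xip i) - (∑ i, p i * omegaV A i) + ‖c‖ ^ 2 := by
    simp only [rho2, dotProduct, Pi.sub_apply, mul_sub, Finset.sum_sub_distrib, hc]
  rw [this]
  linarith
end
end

section
/- Let ℋ = ∩ᵢ {x ∈ ℝⁿ : ‖x − a⁽ⁱ⁾‖₂ ≤ √(ξᵢ⁺)} and let 𝒳 ⊆ ℋ be any subset (in particular the localization set 𝒳 = 𝒳_d ∩ ℋ). Then for every weight p in the probability simplex Δ_m, the Euclidean diameter satisfies diam(𝒳) ≤ 2 ρ(p), where ρ(p)² = pᵀ(ξ⁺ − ω) + ‖Ap‖₂²; in particular diam(𝒳) ≤ 2 ρ⋆ with ρ⋆ = inf over p ∈ Δ_m of ρ(p). -/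
open Matrix
open scoped InnerProductSpace

noncomputable section

lemma center_eq {n m : ℕ} (A : Matrix (Fin n) (Fin m) ℝ) (p : Fin m → ℝ) :
    toE (A.mulVec p) = ∑ i, p i • colE A i := by
  ext k
  have : (∑ i, p i • colE A i : EuclideanSpace ℝ (Fin n)) k = ∑ i, (p i • colE A i) k := by
    exact map_sum (EuclideanSpace.projₗ (𝕜 := ℝ) (ι := Fin n) k)
      (fun i => (p i • colE A i : EuclideanSpace ℝ (Fin n))) Finset.univ
  rw [this]
  simp only [toE, colE, Matrix.mulVec, dotProduct, PiLp.toLp_apply, PiLp.smul_apply, smul_eq_mul]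
  exact Finset.sum_congr rfl fun i _ => mul_comm _ _

lemma key_ball {n m : ℕ} (A : Matrix (Fin n) (Fin m) ℝ) (xip : Fin m → ℝ)
    (p : Fin m → ℝ) (hp : p ∈ stdSimplex ℝ (Fin m))
    (x : EuclideanSpace ℝ (Fin n)) (hx : ∀ i, ‖x - colE A i‖ ≤ Real.sqrt (xip i))
    (hxip : ∀ i, 0 ≤ xip i) :
    ‖x - toE (A.mulVec p)‖ ≤ Real.sqrt (rho2 A xip p) := by
  set c := toE (A.mulVec p) with hc
  have hcsum : c = ∑ i, p i • colE A i := center_eq A p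
  have hinner : ⟪x, c⟫_ℝ = ∑ i, p i * ⟪x, colE A i⟫_ℝ := by
    rw [hcsum, inner_sum]
    exact Finset.sum_congr rfl fun i _ => real_inner_smul_right x (colE A i) (p i)
  have expand : ∀ y : EuclideanSpace ℝ (Fin n),
      ‖x - y‖ ^ 2 = ‖x‖ ^ 2 - 2 * ⟪x, y⟫_ℝ + ‖y‖ ^ 2 := fun y => by
    rw [norm_sub_sq_real]
  have h1 : ∑ i, p i * ‖x - colE A i‖ ^ 2 ≤ p ⬝ᵥ xip := by
    rw [dotProduct]
    refine Finset.sum_le_sum fun i _ => mul_le_mul_of_nonneg_left ?_ (hp.1 i)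
    calc ‖x - colE A i‖ ^ 2 ≤ Real.sqrt (xip i) ^ 2 :=
          pow_le_pow_left₀ (norm_nonneg _) (hx i) 2
      _ = xip i := Real.sq_sqrt (hxip i)
  have h2 : ∑ i, p i * ‖x - colE A i‖ ^ 2
      = ‖x‖ ^ 2 - 2 * ⟪x, c⟫_ℝ + p ⬝ᵥ omegaV A := by
    have : ∀ i ∈ Finset.univ, p i * ‖x - colE A i‖ ^ 2
        = p i * ‖x‖ ^ 2 - 2 * (p i * ⟪x, colE A i⟫_ℝ) + p i * ‖colE A i‖ ^ 2 := by
      intro i _; rw [expand]; ring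
    rw [Finset.sum_congr rfl this, Finset.sum_add_distrib, Finset.sum_sub_distrib,
      ← Finset.sum_mul, hp.2, one_mul, ← Finset.mul_sum, ← hinner]
    rfl
  have hsq : ‖x - c‖ ^ 2 ≤ rho2 A xip p := by
    have hsub : p ⬝ᵥ (xip - omegaV A) = p ⬝ᵥ xip - p ⬝ᵥ omegaV A := by
      simp [dotProduct, mul_sub, Finset.sum_sub_distrib]
    rw [rho2, hsub, ← hc]
    nlinarith [h1, h2, expand c]
  calc ‖x - c‖ = Real.sqrt (‖x - c‖ ^ 2) := (Real.sqrt_sq (norm_nonneg _)).symm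
    _ ≤ Real.sqrt (rho2 A xip p) := Real.sqrt_le_sqrt hsq

/-- For any subset 𝒳 of ℋ and every p ∈ Δ_m, diam(𝒳) ≤ 2ρ(p); in particular
diam(𝒳) ≤ 2ρ⋆ with ρ⋆ = inf_{p ∈ Δ_m} ρ(p). -/
theorem stmt9 {n m : ℕ} (hm : 0 < m) (A : Matrix (Fin n) (Fin m) ℝ) (xip : Fin m → ℝ)
    (hxip : ∀ i, 0 ≤ xip i) (X : Set (EuclideanSpace ℝ (Fin n))) (hX : X ⊆ Hset A xip) :
    (∀ p ∈ stdSimplex ℝ (Fin m),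
        EMetric.diam X ≤ ENNReal.ofReal (2 * Real.sqrt (rho2 A xip p))) ∧
      EMetric.diam X ≤
        ENNReal.ofReal
          (2 * sInf {r | ∃ p ∈ stdSimplex ℝ (Fin m), r = Real.sqrt (rho2 A xip p)}) := by
  have hdiam : ∀ p ∈ stdSimplex ℝ (Fin m),
      EMetric.diam X ≤ ENNReal.ofReal (2 * Real.sqrt (rho2 A xip p)) := by
    intro p hp
    apply EMetric.diam_le
    intro x hx y hy
    rw [edist_dist]
    apply ENNReal.ofReal_le_ofReal
    have hx' := key_ball A xip p hp x (hX hx) hxip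
    have hy' := key_ball A xip p hp y (hX hy) hxip
    have hrev : ‖toE (A.mulVec p) - y‖ = ‖y - toE (A.mulVec p)‖ := norm_sub_rev _ _
    calc dist x y ≤ dist x (toE (A.mulVec p)) + dist (toE (A.mulVec p)) y :=
          dist_triangle _ _ _
      _ ≤ 2 * Real.sqrt (rho2 A xip p) := by
          rw [dist_eq_norm, dist_eq_norm, hrev]; linarith
  refine ⟨hdiam, ?_⟩
  have hp0 : (fun _ : Fin m => (m : ℝ)⁻¹) ∈ stdSimplex ℝ (Fin m) := by
    constructor
    · intro i; positivity
    · simp [Finset.sum_const, Finset.card_univ]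
      field_simp
  set S := {r | ∃ p ∈ stdSimplex ℝ (Fin m), r = Real.sqrt (rho2 A xip p)} with hS
  have hSne : S.Nonempty := ⟨_, _, hp0, rfl⟩
  have hfin : EMetric.diam X ≠ ⊤ :=
    (lt_of_le_of_lt (hdiam _ hp0) ENNReal.ofReal_lt_top).ne
  set D := (EMetric.diam X).toReal with hD
  have hDle : ∀ r ∈ S, D ≤ 2 * r := by
    rintro r ⟨p, hp, rfl⟩
    exact ENNReal.toReal_le_of_le_ofReal (by positivity) (hdiam p hp)
  have h2 : D / 2 ≤ sInf S := le_csInf hSne fun r hr => by linarith [hDle r hr]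
  calc EMetric.diam X = ENNReal.ofReal D := (ENNReal.ofReal_toReal hfin).symm
    _ ≤ ENNReal.ofReal (2 * sInf S) := ENNReal.ofReal_le_ofReal (by linarith)
end
end

section
/- For the uniform weight p = (1/m)𝟙, the aggregated squared radius satisfies ρ(p)² = (1/m) Σᵢ ξᵢ⁺ − (1/m) tr S(A), where S(A) = A Q_m Aᵀ; consequently, any subset 𝒳 of ℋ = ∩ᵢ {x : ‖x − a⁽ⁱ⁾‖₂ ≤ √(ξᵢ⁺)} satisfies diam(𝒳) ≤ 2 √((1/m) Σᵢ ξᵢ⁺ − (1/m) tr S(A)). -/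
open Matrix
open scoped InnerProductSpace

noncomputable section

lemma aux_norm_toE_sq {n : ℕ} (v : Fin n → ℝ) : ‖toE v‖ ^ 2 = ∑ k, (v k) ^ 2 := by
  rw [EuclideanSpace.norm_eq, Real.sq_sqrt (by positivity)]
  simp [toE, sq_abs]

lemma aux_inner {n : ℕ} (u : EuclideanSpace ℝ (Fin n)) (v : Fin n → ℝ) :
    ⟪u, toE v⟫_ℝ = ∑ k, u k * v k := by
  simp [toE, PiLp.inner_apply, RCLike.inner_apply, mul_comm]

lemma aux_trace {n m : ℕ} (A : Matrix (Fin n) (Fin m) ℝ) :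
    (A * Qm m * Aᵀ).trace = (∑ i, ∑ k, (A k i) ^ 2) - (m : ℝ)⁻¹ * ∑ k, (∑ i, A k i) ^ 2 := by
  simp only [Matrix.trace, Matrix.diag, Matrix.mul_apply, Qm, onesM, Matrix.sub_apply,
    Matrix.smul_apply, Matrix.one_apply, Matrix.of_apply, Matrix.transpose_apply]
  simp only [sub_mul, mul_sub, Finset.sum_sub_distrib, mul_ite, ite_mul, mul_one, mul_zero,
    zero_mul, Finset.sum_ite_eq, Finset.sum_ite_eq', Finset.mem_univ, if_true, smul_eq_mul]
  rw [Finset.sum_comm]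
  congr 1
  · exact Finset.sum_congr rfl fun i _ => Finset.sum_congr rfl fun k _ => (sq (A k i)).symm
  · rw [Finset.mul_sum]
    refine Finset.sum_congr rfl fun k _ => ?_
    rw [← Finset.mul_sum, ← Finset.sum_mul, sq]
    ring

/-- For the uniform weight p = (1/m)𝟙,
ρ(p)² = (1/m) Σᵢ ξᵢ⁺ − (1/m) tr S(A); consequently any subset 𝒳 of ℋ satisfies
diam(𝒳) ≤ 2 √((1/m) Σᵢ ξᵢ⁺ − (1/m) tr S(A)). -/
theorem stmt10 {n m : ℕ} (hm : 0 < m) (A : Matrix (Fin n) (Fin m) ℝ) (xip : Fin m → ℝ)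
    (hxip : ∀ i, 0 ≤ xip i) :
    rho2 A xip (fun _ => (m : ℝ)⁻¹) =
        (m : ℝ)⁻¹ * ∑ i, xip i - (m : ℝ)⁻¹ * (A * Qm m * Aᵀ).trace ∧
      ∀ X : Set (EuclideanSpace ℝ (Fin n)), X ⊆ Hset A xip →
        EMetric.diam X ≤
          ENNReal.ofReal
            (2 * Real.sqrt ((m : ℝ)⁻¹ * ∑ i, xip i - (m : ℝ)⁻¹ * (A * Qm m * Aᵀ).trace)) := by
  have hmne : (m : ℝ) ≠ 0 := Nat.cast_ne_zero.2 hm.ne'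
  set c : EuclideanSpace ℝ (Fin n) := toE (A.mulVec fun _ => (m : ℝ)⁻¹) with hc
  -- ρ² in a convenient form
  have hrho : rho2 A xip (fun _ => (m : ℝ)⁻¹) =
      (m : ℝ)⁻¹ * ∑ i, xip i - (m : ℝ)⁻¹ * ∑ i, omegaV A i + ‖c‖ ^ 2 := by
    simp only [rho2, dotProduct, Pi.sub_apply, ← hc, mul_sub, Finset.sum_sub_distrib,
      ← Finset.mul_sum]
  -- part 1
  have part1 : rho2 A xip (fun _ => (m : ℝ)⁻¹) =
      (m : ℝ)⁻¹ * ∑ i, xip i - (m : ℝ)⁻¹ * (A * Qm m * Aᵀ).trace := by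
    rw [hrho, aux_trace, hc, aux_norm_toE_sq]
    simp only [Matrix.mulVec, dotProduct, omegaV, colE, aux_norm_toE_sq]
    have e1 : ∀ k : Fin n, (∑ i, A k i * (m : ℝ)⁻¹) ^ 2 = (∑ i, A k i) ^ 2 * ((m : ℝ)⁻¹) ^ 2 :=
      fun k => by rw [← Finset.sum_mul, mul_pow]
    simp_rw [e1]
    rw [← Finset.sum_mul]
    field_simp
    ring
  refine ⟨part1, fun X hX => ?_⟩
  set R : ℝ := (m : ℝ)⁻¹ * ∑ i, xip i - (m : ℝ)⁻¹ * (A * Qm m * Aᵀ).trace with hR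
  -- key: any point of ℋ is within √R of the centroid c
  have hkey : ∀ x ∈ Hset A xip, ‖x - c‖ ^ 2 ≤ R := by
    intro x hx
    have hsum_inner : ∑ i, ⟪x, colE A i⟫_ℝ = (m : ℝ) * ⟪x, c⟫_ℝ := by
      simp only [colE, aux_inner, hc, Matrix.mulVec, dotProduct]
      rw [Finset.sum_comm, Finset.mul_sum]
      refine Finset.sum_congr rfl fun k _ => ?_
      simp only [Finset.mul_sum]
      exact Finset.sum_congr rfl fun i _ => by field_simp
    have expand : ∀ i : Fin m, ‖x - colE A i‖ ^ 2
        = ‖x‖ ^ 2 - 2 * ⟪x, colE A i⟫_ℝ + ‖colE A i‖ ^ 2 :=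
      fun i => norm_sub_sq_real x _
    have hident : ‖x - c‖ ^ 2 =
        (m : ℝ)⁻¹ * ∑ i, ‖x - colE A i‖ ^ 2 - (m : ℝ)⁻¹ * ∑ i, omegaV A i + ‖c‖ ^ 2 := by
      simp only [omegaV]
      simp_rw [expand, Finset.sum_add_distrib, Finset.sum_sub_distrib, Finset.sum_const,
        Finset.card_univ, Fintype.card_fin, ← Finset.mul_sum, hsum_inner]
      rw [norm_sub_sq_real x c]
      field_simp
      ring
    have hsum : ∑ i, ‖x - colE A i‖ ^ 2 ≤ ∑ i, xip i := by
      refine Finset.sum_le_sum fun i _ => ?_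
      calc ‖x - colE A i‖ ^ 2 ≤ Real.sqrt (xip i) ^ 2 :=
            pow_le_pow_left₀ (norm_nonneg _) (hx i) 2
        _ = xip i := Real.sq_sqrt (hxip i)
    have : R = (m : ℝ)⁻¹ * ∑ i, xip i - (m : ℝ)⁻¹ * ∑ i, omegaV A i + ‖c‖ ^ 2 :=
      part1.symm.trans hrho
    rw [this, hident]
    have hmpos : (0:ℝ) < (m : ℝ)⁻¹ := by positivity
    nlinarith [hsum]
  have hdist : ∀ x ∈ Hset A xip, ‖x - c‖ ≤ Real.sqrt R := by
    intro x hx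
    have h1 := hkey x hx
    calc ‖x - c‖ = Real.sqrt (‖x - c‖ ^ 2) := (Real.sqrt_sq (norm_nonneg _)).symm
      _ ≤ Real.sqrt R := Real.sqrt_le_sqrt h1
  refine EMetric.diam_le fun x hx y hy => ?_
  rw [edist_dist]
  refine ENNReal.ofReal_le_ofReal ?_
  calc dist x y ≤ dist x c + dist c y := dist_triangle x c y
    _ = ‖x - c‖ + ‖y - c‖ := by rw [dist_eq_norm, dist_eq_norm, norm_sub_rev c y]
    _ ≤ Real.sqrt R + Real.sqrt R := add_le_add (hdist x (hX hx)) (hdist y (hX hy))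
    _ = 2 * Real.sqrt R := by ring
end
end

section
/- Let ℋ = ∩ᵢ {x ∈ ℝⁿ : ‖x − a⁽ⁱ⁾‖₂ ≤ √(ξᵢ⁺)} be nonempty and let h_ℋ(v) = sup over x ∈ ℋ of vᵀx be its support function. Then for every v ∈ ℝⁿ and every weight p in the probability simplex Δ_m, h_ℋ(v) ≤ vᵀ(Ap) + ‖v‖₂ ρ(p), where ρ(p)² = pᵀ(ξ⁺ − ω) + ‖Ap‖₂². -/
open Matrix
open scoped InnerProductSpace

noncomputable section

lemma inner_mulVec {n m : ℕ} (A : Matrix (Fin n) (Fin m) ℝ) (p : Fin m → ℝ)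
    (x : EuclideanSpace ℝ (Fin n)) :
    ⟪x, toE (A.mulVec p)⟫_ℝ = ∑ j, p j * ⟪x, colE A j⟫_ℝ := by
  simp only [PiLp.inner_apply, RCLike.inner_apply, starRingEnd_apply, star_trivial,
    toE, colE, PiLp.toLp_apply, Matrix.mulVec, dotProduct]
  simp only [Finset.mul_sum, Finset.sum_mul]
  rw [Finset.sum_comm]
  exact Finset.sum_congr rfl fun j _ => Finset.sum_congr rfl fun k _ => by ring

lemma key_identity {n m : ℕ} (A : Matrix (Fin n) (Fin m) ℝ) (p : Fin m → ℝ)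
    (hp1 : ∑ i, p i = 1) (x : EuclideanSpace ℝ (Fin n)) :
    ‖x - toE (A.mulVec p)‖ ^ 2
      = ∑ i, p i * ‖x - colE A i‖ ^ 2 - p ⬝ᵥ omegaV A + ‖toE (A.mulVec p)‖ ^ 2 := by
  have expand : ∀ y : EuclideanSpace ℝ (Fin n),
      ‖x - y‖ ^ 2 = ‖x‖ ^ 2 - 2 * ⟪x, y⟫_ℝ + ‖y‖ ^ 2 := fun y =>
    norm_sub_sq_real x y
  rw [expand]
  have : ∑ i, p i * ‖x - colE A i‖ ^ 2
      = ‖x‖ ^ 2 - 2 * ⟪x, toE (A.mulVec p)⟫_ℝ + p ⬝ᵥ omegaV A := by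
    simp only [expand, inner_mulVec A p x, dotProduct, omegaV]
    rw [Finset.mul_sum]
    rw [show ∀ f g h : Fin m → ℝ, (∑ i, p i * (f i - g i + h i))
        = (∑ i, p i * f i) - (∑ i, p i * g i) + ∑ i, p i * h i from fun f g h => by
      simp [mul_sub, mul_add, Finset.sum_add_distrib, Finset.sum_sub_distrib]]
    have : ∑ i, p i * ‖x‖ ^ 2 = ‖x‖ ^ 2 := by
      rw [← Finset.sum_mul, hp1, one_mul]
    rw [this]
    congr 1
    · congr 1
      exact Finset.sum_congr rfl fun i _ => by ring
  rw [this]; ring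

/-- If ℋ is nonempty, then for every v ∈ ℝⁿ and every p ∈ Δ_m,
h_ℋ(v) ≤ vᵀ(Ap) + ‖v‖₂ ρ(p). -/
theorem stmt12 {n m : ℕ} (A : Matrix (Fin n) (Fin m) ℝ) (xip : Fin m → ℝ)
    (hxip : ∀ i, 0 ≤ xip i) (hne : (Hset A xip).Nonempty)
    (v : EuclideanSpace ℝ (Fin n)) (p : Fin m → ℝ) (hp : p ∈ stdSimplex ℝ (Fin m)) :
    suppF (Hset A xip) v ≤
      ⟪v, toE (A.mulVec p)⟫_ℝ + ‖v‖ * Real.sqrt (rho2 A xip p) := by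
  obtain ⟨hp0, hp1⟩ := hp
  have hrho : ∀ x ∈ Hset A xip, ‖x - toE (A.mulVec p)‖ ^ 2 ≤ rho2 A xip p := by
    intro x hx
    rw [key_identity A p hp1 x, rho2]
    have hsum : ∑ i, p i * ‖x - colE A i‖ ^ 2 ≤ ∑ i, p i * xip i := by
      apply Finset.sum_le_sum
      intro i _
      apply mul_le_mul_of_nonneg_left _ (hp0 i)
      calc ‖x - colE A i‖ ^ 2 ≤ Real.sqrt (xip i) ^ 2 := by
            apply pow_le_pow_left₀ (norm_nonneg _) (hx i)
        _ = xip i := Real.sq_sqrt (hxip i)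
    have : p ⬝ᵥ (xip - omegaV A) = (∑ i, p i * xip i) - p ⬝ᵥ omegaV A := by
      simp [dotProduct, mul_sub, Finset.sum_sub_distrib]
    linarith
  have hbound : ∀ x ∈ Hset A xip,
      ⟪v, x⟫_ℝ ≤ ⟪v, toE (A.mulVec p)⟫_ℝ + ‖v‖ * Real.sqrt (rho2 A xip p) := by
    intro x hx
    have h1 : ⟪v, x - toE (A.mulVec p)⟫_ℝ ≤ ‖v‖ * Real.sqrt (rho2 A xip p) := by
      calc ⟪v, x - toE (A.mulVec p)⟫_ℝ ≤ ‖v‖ * ‖x - toE (A.mulVec p)‖ :=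
            real_inner_le_norm _ _
        _ ≤ ‖v‖ * Real.sqrt (rho2 A xip p) := by
            apply mul_le_mul_of_nonneg_left _ (norm_nonneg v)
            have := hrho x hx
            calc ‖x - toE (A.mulVec p)‖ = Real.sqrt (‖x - toE (A.mulVec p)‖ ^ 2) :=
                  (Real.sqrt_sq (norm_nonneg _)).symm
              _ ≤ Real.sqrt (rho2 A xip p) := Real.sqrt_le_sqrt this
    have h2 : ⟪v, x - toE (A.mulVec p)⟫_ℝ = ⟪v, x⟫_ℝ - ⟪v, toE (A.mulVec p)⟫_ℝ :=
      inner_sub_right v x _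
    linarith
  apply csSup_le (hne.image _)
  rintro y ⟨x, hx, rfl⟩
  exact hbound x hx
end
end

section
/- Assume ℋ = ∩ᵢ {x ∈ ℝⁿ : ‖x − a⁽ⁱ⁾‖₂ ≤ √(ξᵢ⁺)} has nonempty interior, i.e., there exists x₀ with ‖x₀ − a⁽ⁱ⁾‖₂² < ξᵢ⁺ for all i. Then for every v ∈ ℝⁿ, the support function h_ℋ(v) = sup over x ∈ ℋ of vᵀx satisfies the exact formula h_ℋ(v) = min over p in the probability simplex Δ_m of (vᵀ(Ap) + ‖v‖₂ ρ(p)), where ρ(p)² = pᵀ(ξ⁺ − ω) + ‖Ap‖₂². -/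
open Matrix
open scoped InnerProductSpace

noncomputable section

section Aux

variable {n m : ℕ} (A : Matrix (Fin n) (Fin m) ℝ)

lemma inner_toE_mulVec (x : EuclideanSpace ℝ (Fin n)) (p : Fin m → ℝ) :
    ⟪x, toE (A.mulVec p)⟫_ℝ = ∑ j, p j * ⟪x, colE A j⟫_ℝ := by
  simp only [PiLp.inner_apply, toE, colE, Matrix.mulVec, dotProduct, RCLike.inner_apply,
    conj_trivial, Finset.mul_sum, PiLp.toLp_apply]
  rw [Finset.sum_comm]
  congr 1; ext j; rw [Finset.sum_mul]; congr 1; ext k; ring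

lemma weighted_ident (p : Fin m → ℝ) (hp : p ∈ stdSimplex ℝ (Fin m))
    (x : EuclideanSpace ℝ (Fin n)) :
    ∑ i, p i * ‖x - colE A i‖^2
      = ‖x - toE (A.mulVec p)‖^2 - ‖toE (A.mulVec p)‖^2 + p ⬝ᵥ omegaV A := by
  have hc := inner_toE_mulVec A x p
  have h1 : ∑ i, p i * ‖x - colE A i‖^2
      = (∑ i, p i) * ‖x‖^2 - 2*(∑ i, p i * ⟪x, colE A i⟫_ℝ) + ∑ i, p i * omegaV A i := by
    have h2 : ∀ i, p i * ‖x - colE A i‖^2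
        = p i * ‖x‖^2 - 2*(p i * ⟪x, colE A i⟫_ℝ) + p i * omegaV A i := fun i => by
      rw [norm_sub_sq_real]; unfold omegaV; ring
    simp_rw [h2, Finset.sum_add_distrib, Finset.sum_sub_distrib, ← Finset.mul_sum,
      ← Finset.sum_mul]
  rw [h1, hp.2, ← hc, norm_sub_sq_real]
  simp only [dotProduct]
  ring

lemma rho2_alt (xip : Fin m → ℝ) (p : Fin m → ℝ) :
    rho2 A xip p = p ⬝ᵥ xip - p ⬝ᵥ omegaV A + ‖toE (A.mulVec p)‖^2 := by
  rw [rho2, dotProduct_sub]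

/-- For x in ℋ, the distance to the aggregated center is controlled by ρ(p)². -/
lemma dist_sq_le_rho2 (xip : Fin m → ℝ) (hxip : ∀ i, 0 < xip i)
    (p : Fin m → ℝ) (hp : p ∈ stdSimplex ℝ (Fin m))
    (x : EuclideanSpace ℝ (Fin n)) (hx : x ∈ Hset A xip) :
    ‖x - toE (A.mulVec p)‖^2 ≤ rho2 A xip p := by
  have hineq : ∑ i, p i * ‖x - colE A i‖^2 ≤ p ⬝ᵥ xip := by
    rw [dotProduct]
    refine Finset.sum_le_sum fun i _ => ?_
    refine mul_le_mul_of_nonneg_left ?_ (hp.1 i)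
    calc ‖x - colE A i‖^2 ≤ (Real.sqrt (xip i))^2 :=
          pow_le_pow_left₀ (norm_nonneg _) (hx i) 2
      _ = xip i := Real.sq_sqrt (hxip i).le
  have hid := weighted_ident A p hp x
  rw [rho2_alt]
  linarith

lemma rho2_pos (xip : Fin m → ℝ)
    (hint : ∃ x₀ : EuclideanSpace ℝ (Fin n), ∀ i, ‖x₀ - colE A i‖ ^ 2 < xip i)
    (p : Fin m → ℝ) (hp : p ∈ stdSimplex ℝ (Fin m)) :
    0 < rho2 A xip p := by
  obtain ⟨x₀, hx₀⟩ := hint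
  have hid := weighted_ident A p hp x₀
  have hex : ∃ i, 0 < p i := by
    by_contra h
    push_neg at h
    have : ∑ i, p i = 0 :=
      Finset.sum_eq_zero fun i _ => le_antisymm (h i) (hp.1 i)
    rw [hp.2] at this; norm_num at this
  obtain ⟨i₀, hi₀⟩ := hex
  have hstrict : ∑ i, p i * ‖x₀ - colE A i‖^2 < p ⬝ᵥ xip := by
    rw [dotProduct]
    have : 0 < ∑ i, p i * (xip i - ‖x₀ - colE A i‖^2) := by
      refine Finset.sum_pos' (fun i _ => mul_nonneg (hp.1 i) (by linarith [hx₀ i])) ?_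
      exact ⟨i₀, Finset.mem_univ i₀, mul_pos hi₀ (by linarith [hx₀ i₀])⟩
    have hsplit : ∑ i, p i * (xip i - ‖x₀ - colE A i‖^2)
        = ∑ i, p i * xip i - ∑ i, p i * ‖x₀ - colE A i‖^2 := by
      rw [← Finset.sum_sub_distrib]; congr 1; ext i; ring
    linarith [hsplit ▸ this]
  have hn : (0:ℝ) ≤ ‖x₀ - toE (A.mulVec p)‖^2 := sq_nonneg _
  rw [rho2_alt]
  linarith

lemma toE_mulVec_single (i : Fin m) : toE (A.mulVec (Pi.single i 1)) = colE A i := by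
  ext k
  simp [toE, colE, Matrix.mulVec, dotProduct, Pi.single_apply]

lemma toE_mulVec_comb (p q : Fin m → ℝ) (t : ℝ) :
    toE (A.mulVec (p + t • (q - p)))
      = toE (A.mulVec p) + t • (toE (A.mulVec q) - toE (A.mulVec p)) := by
  rw [Matrix.mulVec_add, Matrix.mulVec_smul, Matrix.mulVec_sub]; simp [toE, WithLp.toLp_add, WithLp.toLp_smul, WithLp.toLp_sub]

lemma continuous_toE_mulVec : Continuous fun p : Fin m → ℝ => toE (A.mulVec p) := by
  have h1 : Continuous fun p : Fin m → ℝ => A.mulVec p := by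
    apply continuous_pi
    intro k
    simp only [Matrix.mulVec, dotProduct]
    exact continuous_finset_sum _ fun j _ => (continuous_const.mul (continuous_apply j))
  exact (EuclideanSpace.equiv (Fin n) ℝ).symm.continuous.comp h1

lemma continuous_rho2 (xip : Fin m → ℝ) : Continuous fun p : Fin m → ℝ => rho2 A xip p := by
  unfold rho2
  apply Continuous.add
  · simp only [dotProduct]
    exact continuous_finset_sum _ fun j _ => ((continuous_apply j).mul continuous_const)
  · exact ((continuous_toE_mulVec A).norm).pow 2

end Aux

/-- If ℋ has nonempty interior (Slater point x₀ with ‖x₀ − a⁽ⁱ⁾‖² < ξᵢ⁺ for all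
i), then for every v ∈ ℝⁿ the support function of ℋ satisfies the exact formula
h_ℋ(v) = min_{p ∈ Δ_m} (vᵀ(Ap) + ‖v‖₂ ρ(p)), the minimum being attained. -/
theorem stmt13 {n m : ℕ} (hm : 0 < m) (A : Matrix (Fin n) (Fin m) ℝ) (xip : Fin m → ℝ)
    (hxip : ∀ i, 0 < xip i)
    (hint : ∃ x₀ : EuclideanSpace ℝ (Fin n), ∀ i, ‖x₀ - colE A i‖ ^ 2 < xip i)
    (v : EuclideanSpace ℝ (Fin n)) :
    IsLeast
      {t | ∃ p ∈ stdSimplex ℝ (Fin m),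
        t = ⟪v, toE (A.mulVec p)⟫_ℝ + ‖v‖ * Real.sqrt (rho2 A xip p)}
      (suppF (Hset A xip) v) := by
  classical
  obtain ⟨x₀, hx₀⟩ := hint
  have hx₀H : x₀ ∈ Hset A xip := by
    intro i
    have h1 : ‖x₀ - colE A i‖ = Real.sqrt (‖x₀ - colE A i‖^2) :=
      (Real.sqrt_sq (norm_nonneg _)).symm
    rw [h1]
    exact Real.sqrt_le_sqrt (hx₀ i).le
  set g : (Fin m → ℝ) → ℝ :=
    fun p => ⟪v, toE (A.mulVec p)⟫_ℝ + ‖v‖ * Real.sqrt (rho2 A xip p) with hg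
  -- upper bound: every point of ℋ has inner product ≤ g p for every p in the simplex
  have hub : ∀ p ∈ stdSimplex ℝ (Fin m), ∀ x ∈ Hset A xip, ⟪v, x⟫_ℝ ≤ g p := by
    intro p hp x hx
    have hd := dist_sq_le_rho2 A xip hxip p hp x hx
    have hdist : ‖x - toE (A.mulVec p)‖ ≤ Real.sqrt (rho2 A xip p) := by
      have : ‖x - toE (A.mulVec p)‖ = Real.sqrt (‖x - toE (A.mulVec p)‖^2) :=
        (Real.sqrt_sq (norm_nonneg _)).symm
      rw [this]
      exact Real.sqrt_le_sqrt hd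
    have hsplit : ⟪v, x⟫_ℝ = ⟪v, toE (A.mulVec p)⟫_ℝ + ⟪v, x - toE (A.mulVec p)⟫_ℝ := by
      rw [← inner_add_right]
      congr 1
      abel
    rw [hsplit]
    have hgp : g p = ⟪v, toE (A.mulVec p)⟫_ℝ + ‖v‖ * Real.sqrt (rho2 A xip p) := rfl
    rw [hgp]
    have h2 : ⟪v, x - toE (A.mulVec p)⟫_ℝ ≤ ‖v‖ * ‖x - toE (A.mulVec p)‖ :=
      real_inner_le_norm _ _
    have h3 : ‖v‖ * ‖x - toE (A.mulVec p)‖ ≤ ‖v‖ * Real.sqrt (rho2 A xip p) :=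
      mul_le_mul_of_nonneg_left hdist (norm_nonneg v)
    linarith
  -- the simplex is nonempty
  have hne : (stdSimplex ℝ (Fin m)).Nonempty :=
    ⟨Pi.single ⟨0, hm⟩ 1, single_mem_stdSimplex ℝ _⟩
  -- continuity of g
  have hgc : Continuous g := by
    apply Continuous.add
    · exact continuous_const.inner (continuous_toE_mulVec A)
    · exact continuous_const.mul (Real.continuous_sqrt.comp (continuous_rho2 A xip))
  -- minimizer of g over the simplex
  obtain ⟨pstar, hpstar, hmin⟩ :=
    (isCompact_stdSimplex ℝ (Fin m)).exists_isMinOn hne hgc.continuousOn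
  have hminle : ∀ p ∈ stdSimplex ℝ (Fin m), g pstar ≤ g p := fun p hp =>
    isMinOn_iff.mp hmin p hp
  -- key: suppF = g pstar
  have himg_ne : ((fun x => ⟪v, x⟫_ℝ) '' Hset A xip).Nonempty := ⟨_, ⟨x₀, hx₀H, rfl⟩⟩
  have hbdd : BddAbove ((fun x => ⟪v, x⟫_ℝ) '' Hset A xip) := by
    refine ⟨g pstar, ?_⟩
    rintro y ⟨x, hx, rfl⟩
    exact hub pstar hpstar x hx
  have hsup_le : suppF (Hset A xip) v ≤ g pstar := by
    apply csSup_le himg_ne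
    rintro y ⟨x, hx, rfl⟩
    exact hub pstar hpstar x hx
  have hkey : suppF (Hset A xip) v = g pstar := by
    rcases eq_or_ne v 0 with hv | hv
    · subst hv
      have himg : ∀ y ∈ ((fun x => ⟪(0:EuclideanSpace ℝ (Fin n)), x⟫_ℝ) '' Hset A xip),
          y = 0 := by rintro y ⟨x, hx, rfl⟩; simp
      have h0 : g pstar = 0 := by
        simp [hg]
      rw [h0]
      apply le_antisymm
      · apply csSup_le himg_ne; intro y hy; rw [himg y hy]
      · apply le_csSup hbdd
        exact ⟨x₀, hx₀H, by simp⟩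
    · -- v ≠ 0 : construct the optimal point xstar
      set V : ℝ := ‖v‖ with hV
      have hVpos : 0 < V := norm_pos_iff.mpr hv
      set c : EuclideanSpace ℝ (Fin n) := toE (A.mulVec pstar) with hc
      set Q0 : ℝ := rho2 A xip pstar with hQ0
      have hQ0pos : 0 < Q0 := rho2_pos A xip ⟨x₀, hx₀⟩ pstar hpstar
      set r : ℝ := Real.sqrt Q0 with hr
      have hrpos : 0 < r := Real.sqrt_pos.mpr hQ0pos
      have hr2 : r^2 = Q0 := Real.sq_sqrt hQ0pos.le
      set xstar : EuclideanSpace ℝ (Fin n) := c + (r / V) • v with hxstar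
      -- first order optimality at pstar, in direction eᵢ − pstar
      have hkeyineq : ∀ i : Fin m,
          0 ≤ V^2 * ((xip i - omegaV A i) - pstar ⬝ᵥ (xip - omegaV A)
              + 2 * ⟪c, colE A i - c⟫_ℝ)
            + 2 * V * r * ⟪v, colE A i - c⟫_ℝ := by
        intro i
        set u : EuclideanSpace ℝ (Fin n) := colE A i - c with hu
        set I : ℝ := ⟪v, u⟫_ℝ with hI
        set b : ℝ := (xip i - omegaV A i) - pstar ⬝ᵥ (xip - omegaV A) + 2 * ⟪c, u⟫_ℝ with hb
        set a : ℝ := ‖u‖^2 with ha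
        -- quadratic expansion of rho2 along the segment
        have hQt : ∀ t : ℝ,
            rho2 A xip (pstar + t • (Pi.single i 1 - pstar)) = Q0 + b*t + a*t^2 := by
          intro t
          rw [rho2]
          have hdot : (pstar + t • (Pi.single i 1 - pstar)) ⬝ᵥ (xip - omegaV A)
              = pstar ⬝ᵥ (xip - omegaV A)
                + t * ((xip i - omegaV A i) - pstar ⬝ᵥ (xip - omegaV A)) := by
            rw [add_dotProduct, smul_dotProduct, sub_dotProduct, single_dotProduct]
            simp [smul_eq_mul]
          have hvec : toE (A.mulVec (pstar + t • (Pi.single i 1 - pstar))) = c + t • u := by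
            rw [toE_mulVec_comb, toE_mulVec_single]
          rw [hdot, hvec]
          have hnorm : ‖c + t • u‖^2 = ‖c‖^2 + 2 * (t * ⟪c, u⟫_ℝ) + t^2 * ‖u‖^2 := by
            rw [norm_add_sq_real, real_inner_smul_right, norm_smul]
            simp [mul_pow, sq_abs]
          rw [hnorm]
          have hrho : Q0 = pstar ⬝ᵥ (xip - omegaV A) + ‖c‖^2 := by
            rw [hQ0, rho2, hc]
          rw [hrho, hb, ha]
          ring
        -- the quotient inequality for small positive t
        set δ : ℝ := min 1 (V * r / (|I| + 1)) with hδ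
        have hδpos : 0 < δ := by
          apply lt_min one_pos
          positivity
        have hquot : ∀ t ∈ Set.Ioo (0:ℝ) δ,
            0 ≤ (V^2*b + 2*V*r*I) + (V^2*a - I^2)*t := by
          intro t ht
          obtain ⟨ht0, htδ⟩ := ht
          have ht1 : t ≤ 1 := le_trans htδ.le (min_le_left _ _)
          -- the moved point lies in the simplex
          have hpt : pstar + t • (Pi.single i 1 - pstar) ∈ stdSimplex ℝ (Fin m) := by
            have hconv := (convex_stdSimplex ℝ (Fin m)) hpstar
              (single_mem_stdSimplex ℝ i)
              (by linarith : (0:ℝ) ≤ 1 - t) ht0.le (by ring)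
            convert hconv using 1
            funext j
            simp only [Pi.add_apply, Pi.smul_apply, Pi.sub_apply, Pi.single_apply,
              smul_eq_mul]
            split_ifs <;> ring
          have hQtpos : 0 < Q0 + b*t + a*t^2 := by
            rw [← hQt t]; exact rho2_pos A xip ⟨x₀, hx₀⟩ _ hpt
          -- expand g at the moved point
          have hinner : ⟪v, toE (A.mulVec (pstar + t • (Pi.single i 1 - pstar)))⟫_ℝ
              = ⟪v, c⟫_ℝ + t * I := by
            rw [toE_mulVec_comb, toE_mulVec_single, inner_add_right, real_inner_smul_right]
          have hgle : ⟪v, c⟫_ℝ + V * r ≤ (⟪v, c⟫_ℝ + t * I)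
              + V * Real.sqrt (Q0 + b*t + a*t^2) := by
            have h0 := hminle _ hpt
            rw [hg] at h0
            simp only at h0
            rw [hinner, hQt t] at h0
            exact h0
          -- from minimality : V * sqrt(Qt) ≥ V*r - t*I
          have hstep : V * r - t * I ≤ V * Real.sqrt (Q0 + b*t + a*t^2) := by
            linarith
          have hrhs : 0 ≤ V * r - t * I := by
            have h1 : t * I ≤ t * (|I| + 1) := by
              have := le_abs_self I
              nlinarith
            have h2 : t * (|I| + 1) ≤ δ * (|I| + 1) := by
              apply mul_le_mul_of_nonneg_right htδ.le
              positivity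
            have h3 : δ * (|I| + 1) ≤ V * r := by
              have h4 : δ ≤ V * r / (|I| + 1) := min_le_right _ _
              rw [le_div_iff₀ (by positivity)] at h4
              exact h4
            linarith
          have hsq : (V * r - t * I)^2 ≤ (V * Real.sqrt (Q0 + b*t + a*t^2))^2 :=
            pow_le_pow_left₀ hrhs hstep 2
          rw [mul_pow, Real.sq_sqrt hQtpos.le] at hsq
          have hexp : V^2 * (Q0 + b*t + a*t^2) - (V*r - t*I)^2
              = t * ((V^2*b + 2*V*r*I) + (V^2*a - I^2)*t) := by
            linear_combination (-(V^2) : ℝ) * hr2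
          have hprod : 0 ≤ t * ((V^2*b + 2*V*r*I) + (V^2*a - I^2)*t) := by
            rw [← hexp]; linarith
          exact nonneg_of_mul_nonneg_right hprod ht0
        -- take the limit t → 0⁺
        have hlim : Filter.Tendsto (fun t : ℝ => (V^2*b + 2*V*r*I) + (V^2*a - I^2)*t)
            (nhdsWithin 0 (Set.Ioi 0)) (nhds (V^2*b + 2*V*r*I)) := by
          have hcont : Continuous (fun t : ℝ => (V^2*b + 2*V*r*I) + (V^2*a - I^2)*t) :=
            continuous_const.add (continuous_const.mul continuous_id)
          have := hcont.tendsto 0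
          simp only [mul_zero, add_zero] at this
          exact this.mono_left nhdsWithin_le_nhds
        have hev : ∀ᶠ t in nhdsWithin 0 (Set.Ioi 0),
            0 ≤ (V^2*b + 2*V*r*I) + (V^2*a - I^2)*t := by
          filter_upwards [Ioo_mem_nhdsGT_of_mem (Set.mem_Ico.mpr ⟨le_refl 0, hδpos⟩)]
            with t ht using hquot t ht
        exact ge_of_tendsto hlim hev
      -- xstar belongs to ℋ
      have hxstarH : xstar ∈ Hset A xip := by
        intro i
        have hk := hkeyineq i
        -- compute the squared distance
        have hdist : ‖xstar - colE A i‖^2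
            = ‖c - colE A i‖^2 + 2 * ((r/V) * (⟪v, c⟫_ℝ - ⟪v, colE A i⟫_ℝ)) + r^2 := by
          have h1 : xstar - colE A i = (c - colE A i) + (r/V) • v := by
            rw [hxstar]; abel
          rw [h1, norm_add_sq_real, real_inner_smul_right, norm_smul]
          have h2 : ⟪c - colE A i, v⟫_ℝ = ⟪v, c⟫_ℝ - ⟪v, colE A i⟫_ℝ := by
            rw [real_inner_comm, inner_sub_right]
          rw [h2]
          rw [mul_pow, Real.norm_eq_abs, sq_abs, ← hV]
          have h4 : (r/V)^2 * V^2 = r^2 := by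
            field_simp
          rw [h4]
        have hle2 : ‖xstar - colE A i‖^2 ≤ xip i := by
          rw [hdist]
          -- expand the inner products in hk
          have hiu : ⟪v, colE A i - c⟫_ℝ = ⟪v, colE A i⟫_ℝ - ⟪v, c⟫_ℝ := inner_sub_right _ _ _
          have hcu : ⟪c, colE A i - c⟫_ℝ = ⟪c, colE A i⟫_ℝ - ‖c‖^2 := by
            rw [inner_sub_right, real_inner_self_eq_norm_sq]
          have hnc : ‖c - colE A i‖^2 = ‖c‖^2 - 2*⟪c, colE A i⟫_ℝ + ‖colE A i‖^2 :=
            norm_sub_sq_real c (colE A i)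
          have homega : omegaV A i = ‖colE A i‖^2 := rfl
          have hQ0id : Q0 = pstar ⬝ᵥ (xip - omegaV A) + ‖c‖^2 := by
            rw [hQ0, rho2, hc]
          rw [hiu, hcu] at hk
          rw [← homega] at hnc
          -- multiply the goal by V^2 > 0
          have hgoal : V^2 * (‖c - colE A i‖^2
                + 2 * ((r/V) * (⟪v, c⟫_ℝ - ⟪v, colE A i⟫_ℝ)) + r^2)
              ≤ V^2 * xip i := by
            have hVne : V ≠ 0 := ne_of_gt hVpos
            have hexpand : V^2 * (‖c - colE A i‖^2
                  + 2 * ((r/V) * (⟪v, c⟫_ℝ - ⟪v, colE A i⟫_ℝ)) + r^2)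
                = V^2 * ‖c - colE A i‖^2
                  + 2 * V * r * (⟪v, c⟫_ℝ - ⟪v, colE A i⟫_ℝ) + V^2 * r^2 := by
              field_simp
            rw [hexpand, hr2, hQ0id, hnc]
            linarith [hk]
          have hV2 : 0 < V^2 := by positivity
          exact le_of_mul_le_mul_left hgoal hV2
        have : ‖xstar - colE A i‖ = Real.sqrt (‖xstar - colE A i‖^2) :=
          (Real.sqrt_sq (norm_nonneg _)).symm
        rw [this]
        exact Real.sqrt_le_sqrt hle2
      -- value at xstar equals g pstar
      have hval : ⟪v, xstar⟫_ℝ = g pstar := by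
        rw [hxstar, inner_add_right, real_inner_smul_right, real_inner_self_eq_norm_sq, hg]
        simp only
        rw [← hc, ← hQ0, ← hr, ← hV]
        field_simp
      apply le_antisymm hsup_le
      rw [← hval]
      exact le_csSup hbdd ⟨xstar, hxstarH, rfl⟩
  constructor
  · exact ⟨pstar, hpstar, hkey⟩
  · rintro t ⟨p, hp, rfl⟩
    apply csSup_le himg_ne
    rintro y ⟨x, hx, rfl⟩
    exact hub p hp x hx
end
end

section
/- Let q_iᵀ denote row i of Q_m Aᵀ, and define β_{ij} = ξⱼ⁺ − ξᵢ⁻ − (Q_m ω)ⱼ + (Q_m ω)ᵢ. Then the polyhedral localization set admits the explicit halfspace representation: 𝒳_d = {x ∈ ℝⁿ : ∃α ∈ ℝ, ξ⁻ ≤ Q_m ω − 2 Q_m Aᵀ x + α𝟙 ≤ ξ⁺} equals {x ∈ ℝⁿ : 2(q_i − q_j)ᵀ x ≤ β_{ij} for all i, j = 1,…,m}. -/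
open Matrix
open scoped InnerProductSpace

noncomputable section

/-- With q_iᵀ the i-th row of Q_m Aᵀ and
β_{ij} = ξⱼ⁺ − ξᵢ⁻ − (Q_m ω)ⱼ + (Q_m ω)ᵢ, the polyhedral localization set admits the explicit
halfspace representation 𝒳_d = {x : 2(q_i − q_j)ᵀx ≤ β_{ij} for all i, j}. -/
theorem stmt17 {n m : ℕ} (A : Matrix (Fin n) (Fin m) ℝ) (xim xip : Fin m → ℝ) :
    Xd A xim xip =
      {x : EuclideanSpace ℝ (Fin n) | ∀ i j,
        2 * (((Qm m * Aᵀ) i - (Qm m * Aᵀ) j) ⬝ᵥ x) ≤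
          xip j - xim i - (Qm m).mulVec (omegaV A) j + (Qm m).mulVec (omegaV A) i} := by
  ext x
  simp only [Xd, Set.mem_setOf_eq, Pi.le_def, Pi.add_apply, Pi.sub_apply, Pi.smul_apply,
    Pi.one_apply, smul_eq_mul, mul_one]
  set c := (Qm m).mulVec (omegaV A) with hc
  set B := Qm m * Aᵀ with hB
  have hBx : ∀ i, B.mulVec x i = B i ⬝ᵥ x := fun i => rfl
  constructor
  · rintro ⟨α, h1, h2⟩ i j
    have hi := h1 i
    have hj := h2 j
    have hsub : (B i - B j) ⬝ᵥ x = B i ⬝ᵥ x - B j ⬝ᵥ x := sub_dotProduct _ _ _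
    rw [hsub, ← hBx i, ← hBx j]
    linarith
  · intro h
    rcases Nat.eq_zero_or_pos m with hm | hm
    · subst hm
      exact ⟨0, fun i => i.elim0, fun i => i.elim0⟩
    · haveI : Nonempty (Fin m) := ⟨⟨0, hm⟩⟩
      refine ⟨Finset.univ.sup' Finset.univ_nonempty
        (fun i => xim i - (c i - 2 * B.mulVec x i)), ?_, ?_⟩
      · intro i
        have := Finset.le_sup' (f := fun i => xim i - (c i - 2 * B.mulVec x i))
          (Finset.mem_univ i)
        linarith
      · intro j
        have hsup : Finset.univ.sup' Finset.univ_nonempty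
            (fun i => xim i - (c i - 2 * B.mulVec x i))
            ≤ xip j - (c j - 2 * B.mulVec x j) := by
          apply Finset.sup'_le
          intro i _
          have hij := h i j
          rw [sub_dotProduct, ← hBx i, ← hBx j] at hij
          linarith
        linarith
end
end
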